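/- Let k ≥ 1, let G be a k-edge-connected finite simple graph on V, fix a root r ∈ V, and let u₀, …, u_t together with k-cuts S₀, …, S_{t+1} form a snug chain. Let v ∈ V∖S_{t+1} and let 0 ≤ j < i ≤ t. Then every k-cut S of G that is crossed by the pair {v, u_i} is also crossed by the pair {v, u_j}. -/
import Mathlib


open Finset

variable {V : Type*} [Fintype V] [DecidableEq V]

/-- `Crosses S e`: exactly one endpoint of the edge/link `e` lies in `S`. -/
def Crosses (S : Finset V) (e : Sym2 V) : Prop :=
  ∃ x y : V, e = s(x, y) ∧ x ∈ S ∧ y ∉ S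

instance (S : Finset V) : DecidablePred (Crosses S) := fun e =>
  decidable_of_iff (∃ x y : V, e = s(x, y) ∧ x ∈ S ∧ y ∉ S) Iff.rfl

/-- The cut `δ(S)`: edges of `G` with exactly one endpoint in `S`. -/
def cutEdges (G : SimpleGraph V) [DecidableRel G.Adj] (S : Finset V) :
    Finset (Sym2 V) :=
  G.edgeFinset.filter fun e => Crosses S e

lemma crosses_iff (S : Finset V) (x y : V) :
    Crosses S s(x, y) ↔ (x ∈ S ↔ y ∉ S) := by
  constructor
  · rintro ⟨a, b, hab, ha, hb⟩
    rw [Sym2.eq_iff] at hab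
    rcases hab with ⟨rfl, rfl⟩ | ⟨rfl, rfl⟩ <;> tauto
  · intro h
    by_cases hx : x ∈ S
    · exact ⟨x, y, rfl, hx, h.mp hx⟩
    · refine ⟨y, x, Sym2.eq_swap, ?_, hx⟩
      by_contra hy; exact hx (h.mpr hy)

lemma cutEdges_card_eq_sum (G : SimpleGraph V) [DecidableRel G.Adj] (S : Finset V) :
    (cutEdges G S).card = ∑ e ∈ G.edgeFinset, if Crosses S e then 1 else 0 := by
  rw [cutEdges, Finset.card_filter]

lemma cutEdges_submod (G : SimpleGraph V) [DecidableRel G.Adj] (A B : Finset V) :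
    (cutEdges G (A ∩ B)).card + (cutEdges G (A ∪ B)).card
      ≤ (cutEdges G A).card + (cutEdges G B).card := by
  rw [cutEdges_card_eq_sum, cutEdges_card_eq_sum, cutEdges_card_eq_sum, cutEdges_card_eq_sum,
    ← Finset.sum_add_distrib, ← Finset.sum_add_distrib]
  apply Finset.sum_le_sum
  intro e _
  induction e using Sym2.inductionOn with
  | hf x y =>
    simp only [crosses_iff, Finset.mem_inter, Finset.mem_union]
    by_cases hxA : x ∈ A <;> by_cases hxB : x ∈ B <;> by_cases hyA : y ∈ A <;>
      by_cases hyB : y ∈ B <;> simp [hxA, hxB, hyA, hyB]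

lemma cutEdges_compl (G : SimpleGraph V) [DecidableRel G.Adj] (S : Finset V) :
    cutEdges G Sᶜ = cutEdges G S := by
  unfold cutEdges
  apply Finset.filter_congr
  intro e _
  induction e using Sym2.inductionOn with
  | hf x y => simp only [crosses_iff, Finset.mem_compl]; tauto

lemma cutEdges_submod_sdiff (G : SimpleGraph V) [DecidableRel G.Adj] (A B : Finset V) :
    (cutEdges G (A \ B)).card + (cutEdges G (B \ A)).card
      ≤ (cutEdges G A).card + (cutEdges G B).card := by
  have h := cutEdges_submod G A Bᶜ
  rw [cutEdges_compl] at h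
  have h1 : A ∩ Bᶜ = A \ B := by ext z; simp [Finset.mem_sdiff]
  have h2 : cutEdges G (A ∪ Bᶜ) = cutEdges G (B \ A) := by
    rw [← cutEdges_compl G (A ∪ Bᶜ)]
    congr 1
    ext z; simp [Finset.mem_sdiff]; tauto
  rw [h1, h2] at h
  exact h

lemma cutEdges_singleton (G : SimpleGraph V) [DecidableRel G.Adj] (a : V) :
    (cutEdges G {a}).card = G.degree a := by
  rw [← SimpleGraph.card_incidenceFinset_eq_degree]
  congr 1
  unfold cutEdges
  rw [SimpleGraph.incidenceFinset]
  ext e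
  simp only [Finset.mem_filter, Set.mem_toFinset, SimpleGraph.mem_incidenceSet]
  induction e using Sym2.inductionOn with
  | hf x y =>
    simp only [crosses_iff, Finset.mem_singleton, SimpleGraph.mem_edgeFinset,
      SimpleGraph.mem_edgeSet]
    simp only [SimpleGraph.incidenceSet, Set.mem_sep_iff, SimpleGraph.mem_edgeSet, Sym2.mem_iff]
    constructor
    · rintro ⟨hadj, h⟩
      have hne := hadj.ne
      exact ⟨hadj, by tauto⟩
    · rintro ⟨hadj, h⟩
      have hne := hadj.ne
      refine ⟨hadj, ?_⟩
      rcases h with rfl | rfl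
      · simp [Ne.symm hne]
      · simp [hne]


/-- `G` is `k`-edge-connected: every nonempty proper cut has at least `k` crossing edges. -/
def EdgeConnected (G : SimpleGraph V) [DecidableRel G.Adj] (k : ℕ) : Prop :=
  ∀ S : Finset V, S.Nonempty → S ≠ Finset.univ → k ≤ (cutEdges G S).card

/-- `S` is a `k`-cut: a nonempty proper vertex set with exactly `k` crossing edges. -/
def IsCut (G : SimpleGraph V) [DecidableRel G.Adj] (k : ℕ) (S : Finset V) : Prop :=
  S.Nonempty ∧ S ≠ Finset.univ ∧ (cutEdges G S).card = k

/-- `(S₁, S₂)` are snug shores for `v` (with respect to the root `r`):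
two `k`-cuts avoiding `r` with `v ∉ S₁` and `S₂ = S₁ ∪ {v}`. -/
def SnugShores (G : SimpleGraph V) [DecidableRel G.Adj] (k : ℕ) (r v : V)
    (S₁ S₂ : Finset V) : Prop :=
  IsCut G k S₁ ∧ IsCut G k S₂ ∧ r ∉ S₁ ∧ r ∉ S₂ ∧ v ∉ S₁ ∧ S₂ = insert v S₁

/-- `v` is a snug vertex (with respect to the root `r`). -/
def Snug (G : SimpleGraph V) [DecidableRel G.Adj] (k : ℕ) (r v : V) : Prop :=
  v ≠ r ∧ k + 1 ≤ G.degree v ∧ ∃ S₁ S₂ : Finset V, SnugShores G k r v S₁ S₂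

/-- A snug chain: snug vertices `u 0, …, u t` together with `k`-cuts
`S 0, …, S (t+1)` such that `(S i, S (i+1))` are snug shores for `u i`. -/
def IsSnugChain (G : SimpleGraph V) [DecidableRel G.Adj] (k : ℕ) (r : V)
    (t : ℕ) (u : ℕ → V) (S : ℕ → Finset V) : Prop :=
  ∀ i ≤ t, Snug G k r (u i) ∧ SnugShores G k r (u i) (S i) (S (i + 1))

lemma cut_subset_of_snug (k : ℕ) (G : SimpleGraph V) [DecidableRel G.Adj]
    (hG : EdgeConnected G k)
    (A : Finset V) (a v : V) (hA : IsCut G k A) (hA' : IsCut G k (insert a A))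
    (haA : a ∉ A) (hdeg : k + 1 ≤ G.degree a)
    (hvA : v ∉ A) (hva : v ≠ a)
    (B : Finset V) (hB : IsCut G k B) (haB : a ∈ B) (hvB : v ∉ B) :
    A ⊆ B := by
  by_contra hcon
  obtain ⟨w, hwA, hwB⟩ := Finset.not_subset.mp hcon
  have hXne : (B \ A).Nonempty := ⟨a, Finset.mem_sdiff.mpr ⟨haB, haA⟩⟩
  have hYne : (A \ B).Nonempty := ⟨w, Finset.mem_sdiff.mpr ⟨hwA, hwB⟩⟩
  have hXproper : B \ A ≠ Finset.univ := by
    intro h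
    have : v ∈ B \ A := h ▸ Finset.mem_univ v
    exact hvB (Finset.mem_sdiff.mp this).1
  have hYproper : A \ B ≠ Finset.univ := by
    intro h
    have : v ∈ A \ B := h ▸ Finset.mem_univ v
    exact hvA (Finset.mem_sdiff.mp this).1
  have hd := cutEdges_submod_sdiff G B A
  rw [hB.2.2, hA.2.2] at hd
  have h1 := hG (B \ A) hXne hXproper
  have h2 := hG (A \ B) hYne hYproper
  have hX : (cutEdges G (B \ A)).card = k := by omega
  have hinter : (B \ A) ∩ insert a A = {a} := by
    ext z
    simp only [Finset.mem_inter, Finset.mem_sdiff, Finset.mem_insert, Finset.mem_singleton]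
    constructor
    · rintro ⟨⟨hzB, hzA⟩, rfl | hz⟩
      · rfl
      · exact absurd hz hzA
    · rintro rfl; exact ⟨⟨haB, haA⟩, Or.inl rfl⟩
  have hsub := cutEdges_submod G (B \ A) (insert a A)
  rw [hinter, cutEdges_singleton, hX, hA'.2.2] at hsub
  have hUne : ((B \ A) ∪ insert a A).Nonempty := ⟨a, by simp⟩
  have hUproper : (B \ A) ∪ insert a A ≠ Finset.univ := by
    intro h
    have : v ∈ (B \ A) ∪ insert a A := h ▸ Finset.mem_univ v
    simp only [Finset.mem_union, Finset.mem_sdiff, Finset.mem_insert] at this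
    rcases this with ⟨hb, _⟩ | (hh | hh)
    · exact hvB hb
    · exact hva hh
    · exact hvA hh
  have hU := hG _ hUne hUproper
  omega


/-- Along a snug chain, for `v ∈ V ∖ S_{t+1}` and `j < i ≤ t`, every `k`-cut
crossed by the link `{v, u i}` is also crossed by the link `{v, u j}`. -/
theorem link_deepest_in
    (k : ℕ) (hk : 1 ≤ k) (G : SimpleGraph V) [DecidableRel G.Adj]
    (hG : EdgeConnected G k) (r : V)
    (t : ℕ) (u : ℕ → V) (Sc : ℕ → Finset V)
    (hchain : IsSnugChain G k r t u Sc)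
    (v : V) (hv : v ∉ Sc (t + 1))
    (i j : ℕ) (hji : j < i) (hit : i ≤ t)
    (S : Finset V) (hS : IsCut G k S) (hcross : Crosses S s(v, u i)) :
    Crosses S s(v, u j) := by
  have hstep : ∀ m, m ≤ t → Sc (m + 1) = insert (u m) (Sc m) := fun m hm =>
    ((hchain m hm).2).2.2.2.2.2
  have hnotmem : ∀ m, m ≤ t → u m ∉ Sc m := fun m hm => ((hchain m hm).2).2.2.2.2.1
  have hmono : ∀ a b, a ≤ b → b ≤ t + 1 → Sc a ⊆ Sc b := by
    intro a b hab
    induction b, hab using Nat.le_induction with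
    | base => intro _; exact Finset.Subset.refl _
    | succ b hb ih =>
      intro hbt
      have hbt' : b ≤ t := by omega
      refine (ih (by omega)).trans ?_
      rw [hstep b hbt']
      exact Finset.subset_insert _ _
  have hui_mem : u i ∈ Sc (i + 1) := by
    rw [hstep i hit]; exact Finset.mem_insert_self _ _
  have huj_mem : u j ∈ Sc i := by
    have h0 : u j ∈ Sc (j + 1) := by
      rw [hstep j (by omega)]; exact Finset.mem_insert_self _ _
    exact hmono (j + 1) i (by omega) (by omega) h0
  have hvSi : v ∉ Sc i := fun h => hv (hmono i (t + 1) (by omega) (le_refl _) h)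
  have hvui : v ≠ u i := by
    rintro rfl
    exact hv (hmono (i + 1) (t + 1) (by omega) (le_refl _) hui_mem)
  have hAcut : IsCut G k (Sc i) := ((hchain i hit).2).1
  have hA'cut : IsCut G k (insert (u i) (Sc i)) := by
    have h0 := ((hchain i hit).2).2.1
    rwa [hstep i hit] at h0
  have hdeg : k + 1 ≤ G.degree (u i) := ((hchain i hit).1).2.1
  rw [crosses_iff] at hcross
  rw [crosses_iff]
  by_cases hvS : v ∈ S
  · have hui_notS : u i ∉ S := hcross.mp hvS
    have hScompl : IsCut G k Sᶜ := by
      refine ⟨⟨u i, Finset.mem_compl.mpr hui_notS⟩, ?_, ?_⟩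
      · intro h
        have hvc : v ∈ Sᶜ := h ▸ Finset.mem_univ v
        exact (Finset.mem_compl.mp hvc) hvS
      · rw [cutEdges_compl]; exact hS.2.2
    have hsub := cut_subset_of_snug k G hG (Sc i) (u i) v hAcut hA'cut
      (hnotmem i hit) hdeg hvSi hvui Sᶜ hScompl (Finset.mem_compl.mpr hui_notS)
      (fun h => (Finset.mem_compl.mp h) hvS)
    have huj : u j ∉ S := Finset.mem_compl.mp (hsub huj_mem)
    tauto
  · have hui_S : u i ∈ S := by tauto
    have hsub := cut_subset_of_snug k G hG (Sc i) (u i) v hAcut hA'cut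
      (hnotmem i hit) hdeg hvSi hvui S hS hui_S hvS
    have huj : u j ∈ S := hsub huj_mem
    tauto
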